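/- Product asymptotics. There exists a constant C > 0, depending only on σ, such that for every integer N ≥ 1, every partition 0 = x₀ < x₁ < ⋯ < x_N = 1 with mesh L = max_{1≤p≤N}(x_p − x_{p−1}), and all indices 0 ≤ ℓ ≤ m ≤ N: | ∏_{p=ℓ}^{m−1} (σ(x_{p+1}) + σ(x_p))/(2σ(x_p)) − √(σ(x_m)/σ(x_ℓ)) | ≤ C·L. -/

import Mathlib

open MeasureTheory Filter

noncomputable section

set_option maxHeartbeats 1000000 in
/-- Product asymptotics. For partitions `0 = x₀ < ⋯ < x_N = 1` with mesh `L`,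
`∏_{p=ℓ}^{m-1} (σ(x_{p+1}) + σ(x_p))/(2σ(x_p)) = √(σ(x_m)/σ(x_ℓ)) + O(L)`,
uniformly, with a constant depending only on `σ`. -/
theorem stmt_8 (σ : ℝ → ℝ)
    (hσ : ContDiffOn ℝ 2 σ (Set.Icc 0 1))
    (hσpos : ∀ x ∈ Set.Icc (0 : ℝ) 1, 0 < σ x) :
    ∃ C : ℝ, 0 < C ∧
      ∀ (N : ℕ), ∀ hN : 1 ≤ N, ∀ x : ℕ → ℝ,
        x 0 = 0 → x N = 1 → (∀ p < N, x p < x (p + 1)) →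
        ∀ ℓ m : ℕ, ℓ ≤ m → m ≤ N →
          |(∏ p ∈ Finset.Ico ℓ m, (σ (x (p + 1)) + σ (x p)) / (2 * σ (x p))) -
              Real.sqrt (σ (x m) / σ (x ℓ))| ≤
            C * (Finset.range N).sup'
              (Finset.nonempty_range_iff.mpr (by omega)) (fun p => x (p + 1) - x p) := by
  -- Lipschitz constant
  obtain ⟨M, hM0, hMlip⟩ : ∃ M : ℝ, 0 ≤ M ∧
      ∀ a ∈ Set.Icc (0:ℝ) 1, ∀ b ∈ Set.Icc (0:ℝ) 1, |σ b - σ a| ≤ M * |b - a| := by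
    have hder : ContinuousOn (derivWithin σ (Set.Icc 0 1)) (Set.Icc 0 1) :=
      hσ.continuousOn_derivWithin (uniqueDiffOn_Icc zero_lt_one) one_le_two
    obtain ⟨M, hM⟩ := isCompact_Icc.exists_bound_of_continuousOn hder
    have hM0 : 0 ≤ M := le_trans (norm_nonneg _) (hM 0 (by norm_num))
    refine ⟨M, hM0, fun a ha b hb => ?_⟩
    have := Convex.norm_image_sub_le_of_norm_derivWithin_le (hσ.differentiableOn (by norm_num))
      hM (convex_Icc 0 1) ha hb
    simpa [Real.norm_eq_abs] using this
  -- min and max of σ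
  obtain ⟨a0, ha0, hmin⟩ := isCompact_Icc.exists_isMinOn (Set.nonempty_Icc.mpr zero_le_one)
    (hσ.continuousOn)
  obtain ⟨a1, ha1, hmax⟩ := isCompact_Icc.exists_isMaxOn (Set.nonempty_Icc.mpr zero_le_one)
    (hσ.continuousOn)
  set δ : ℝ := σ a0 with hδdef
  set Mu : ℝ := σ a1 with hMudef
  have hδ : 0 < δ := hσpos a0 ha0
  have hδle : ∀ y ∈ Set.Icc (0:ℝ) 1, δ ≤ σ y := fun y hy => hmin hy
  have hleMu : ∀ y ∈ Set.Icc (0:ℝ) 1, σ y ≤ Mu := fun y hy => hmax hy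
  have hMu : 0 < Mu := lt_of_lt_of_le hδ (hleMu a0 ha0)
  set K : ℝ := (M/δ)^2/2 with hKdef
  have hK0 : 0 ≤ K := by positivity
  set t0 : ℝ := Real.sqrt (δ/Mu) with ht0def
  have ht0 : 0 < t0 := Real.sqrt_pos.mpr (by positivity)
  set Tmax : ℝ := Real.sqrt (Mu/δ) with hTmaxdef
  have hTmax : 0 < Tmax := Real.sqrt_pos.mpr (by positivity)
  set c : ℝ := (K+1)/t0 with hcdef
  have hc : 0 < c := by positivity
  refine ⟨Tmax * c * Real.exp c, by positivity, ?_⟩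
  -- key per-factor estimate
  have key : ∀ a ∈ Set.Icc (0:ℝ) 1, ∀ b ∈ Set.Icc (0:ℝ) 1, a ≤ b →
      Real.sqrt (σ b / σ a) ≤ (σ b + σ a) / (2 * σ a) ∧
      (σ b + σ a) / (2 * σ a) ≤ Real.sqrt (σ b / σ a) + K * (b - a)^2 := by
    intro a ha b hb hab
    have hσa : 0 < σ a := hσpos a ha
    have hσb : 0 < σ b := hσpos b hb
    set s : ℝ := Real.sqrt (σ b / σ a) with hsdef
    have hs0 : 0 ≤ s := Real.sqrt_nonneg _
    have hs2 : s^2 = σ b / σ a := Real.sq_sqrt (by positivity)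
    have he : (σ b + σ a) / (2 * σ a) = (s^2 + 1)/2 := by
      rw [hs2, div_eq_div_iff (by positivity) (by norm_num : (2:ℝ) ≠ 0)]
      field_simp
    have h1s2 : |1 - s^2| ≤ M * (b - a) / δ := by
      rw [hs2]
      have e1 : |1 - σ b / σ a| = |σ a - σ b| / σ a := by
        have h : 1 - σ b / σ a = (σ a - σ b) / σ a := by field_simp
        rw [h, abs_div, abs_of_pos hσa]
      rw [e1]
      have h2 : |σ a - σ b| ≤ M * (b - a) := by
        calc |σ a - σ b| ≤ M * |a - b| := hMlip b hb a ha
          _ = M * (b - a) := by rw [abs_sub_comm, abs_of_nonneg (by linarith)]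
      calc |σ a - σ b| / σ a ≤ (M * (b-a)) / σ a := by
            exact (div_le_div_iff_of_pos_right hσa).mpr h2
        _ ≤ M * (b - a) / δ := by
            apply div_le_div_of_nonneg_left (by nlinarith) hδ (hδle a ha)
    constructor
    · rw [he]; nlinarith [sq_nonneg (s - 1)]
    · rw [he]
      have h3 : (1 - s)^2 ≤ (1 - s^2)^2 := by nlinarith [sq_nonneg (1-s), sq_nonneg s, sq_nonneg (s*(1-s))]
      have h4 : (1 - s^2)^2 ≤ (M * (b-a) / δ)^2 := by
        rw [← sq_abs (1 - s^2)]
        apply pow_le_pow_left₀ (abs_nonneg _) h1s2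
      have h5 : (M * (b-a)/δ)^2 = 2 * K * (b-a)^2 := by
        rw [hKdef]; field_simp
      nlinarith [sq_nonneg (1-s)]
  intro N hN x hx0 hxN hxlt ℓ m hlm hmN
  set L : ℝ := (Finset.range N).sup' (Finset.nonempty_range_iff.mpr (by omega))
    (fun p => x (p + 1) - x p) with hLdef
  -- monotonicity
  have hmono : ∀ q, q ≤ N → ∀ p, p ≤ q → x p ≤ x q := by
    intro q
    induction q with
    | zero => intro _ p hp; simp [Nat.le_zero.mp hp]
    | succ q ih =>
      intro hq p hp
      rcases Nat.lt_or_ge p (q+1) with h | h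
      · exact le_trans (ih (by omega) p (by omega)) (hxlt q (by omega)).le
      · have : p = q + 1 := le_antisymm hp h
        rw [this]
  have hIcc : ∀ p, p ≤ N → x p ∈ Set.Icc (0:ℝ) 1 := by
    intro p hp
    constructor
    · rw [← hx0]; exact hmono p hp 0 (Nat.zero_le _)
    · rw [← hxN]; exact hmono N le_rfl p hp
  have hpos : ∀ p, p ≤ N → 0 < σ (x p) := fun p hp => hσpos _ (hIcc p hp)
  have hLub : ∀ p, p < N → x (p+1) - x p ≤ L :=
    fun p hp => Finset.le_sup' (fun p => x (p + 1) - x p) (Finset.mem_range.mpr hp)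
  have hL0 : 0 < L := lt_of_lt_of_le (by linarith [hxlt 0 (by omega)]) (hLub 0 (by omega))
  have hL1 : L ≤ 1 := by
    rw [hLdef]
    apply Finset.sup'_le
    intro p hp
    rw [Finset.mem_range] at hp
    have h1 : x (p+1) ≤ 1 := by rw [← hxN]; exact hmono N le_rfl (p+1) (by omega)
    have h2 : 0 ≤ x p := by rw [← hx0]; exact hmono p (by omega) 0 (Nat.zero_le _)
    linarith
  -- telescoping product
  have htel : ∀ m', m' ≤ N → ∀ ℓ', ℓ' ≤ m' →
      (∏ p ∈ Finset.Ico ℓ' m', Real.sqrt (σ (x (p+1)) / σ (x p)))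
        = Real.sqrt (σ (x m') / σ (x ℓ')) := by
    intro m'
    induction m' with
    | zero =>
      intro _ ℓ' hℓ'
      have : ℓ' = 0 := Nat.le_zero.mp hℓ'
      subst this
      rw [Finset.Ico_self, Finset.prod_empty, div_self (hpos 0 (by omega)).ne',
        Real.sqrt_one]
    | succ m' ih =>
      intro hm' ℓ' hℓ'
      rcases Nat.lt_or_ge ℓ' (m'+1) with h | h
      · have hlm' : ℓ' ≤ m' := by omega
        have hm'' : m' ≤ N := by omega
        have h2 := (hpos m' hm'').ne'
        have h3 := (hpos ℓ' (by omega : ℓ' ≤ N)).ne'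
        have h1 : (0:ℝ) ≤ σ (x m') / σ (x ℓ') :=
          div_nonneg (hpos m' hm'').le (hpos ℓ' (by omega)).le
        rw [Finset.prod_Ico_succ_top hlm', ih hm'' ℓ' hlm', ← Real.sqrt_mul h1]
        congr 1
        rw [div_mul_div_comm, mul_comm (σ (x m')) (σ (x (m'+1))),
          mul_div_mul_right _ _ h2]
      · have : ℓ' = m' + 1 := le_antisymm hℓ' h
        subst this
        rw [Finset.Ico_self, Finset.prod_empty, div_self (hpos (m'+1) hm').ne',
          Real.sqrt_one]
  -- telescoping sum
  have hts : (∑ p ∈ Finset.Ico ℓ m, (x (p+1) - x p)) = x m - x ℓ := by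
    rw [Finset.sum_Ico_eq_sub _ hlm, Finset.sum_range_sub, Finset.sum_range_sub]
    ring
  set T := Real.sqrt (σ (x m) / σ (x ℓ)) with hTdef
  have hTle : T ≤ Tmax := by
    rw [hTdef, hTmaxdef]
    apply Real.sqrt_le_sqrt
    apply div_le_div₀ (le_of_lt hMu) (hleMu _ (hIcc m hmN)) hδ (hδle _ (hIcc ℓ (by omega)))
  have hT0 : 0 ≤ T := Real.sqrt_nonneg _
  -- each node in Icc
  have hmem : ∀ p ∈ Finset.Ico ℓ m, x p ∈ Set.Icc (0:ℝ) 1 ∧ x (p+1) ∈ Set.Icc (0:ℝ) 1 ∧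
      x p ≤ x (p+1) ∧ x (p+1) - x p ≤ L ∧ 0 ≤ x (p+1) - x p := by
    intro p hp
    rw [Finset.mem_Ico] at hp
    have hpN : p < N := by omega
    refine ⟨hIcc p (by omega), hIcc (p+1) (by omega), (hxlt p hpN).le, hLub p hpN, by
      linarith [(hxlt p hpN).le]⟩
  -- lower bound: T ≤ P
  set P := ∏ p ∈ Finset.Ico ℓ m, (σ (x (p + 1)) + σ (x p)) / (2 * σ (x p)) with hPdef
  have hlow : T ≤ P := by
    rw [hTdef, ← htel m hmN ℓ hlm, hPdef]
    apply Finset.prod_le_prod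
    · intro p _; positivity
    · intro p hp
      obtain ⟨h1, h2, h3, _, _⟩ := hmem p hp
      exact (key _ h1 _ h2 h3).1
  -- upper bound
  have hsqrt_lb : ∀ p ∈ Finset.Ico ℓ m, t0 ≤ Real.sqrt (σ (x (p+1)) / σ (x p)) := by
    intro p hp
    obtain ⟨h1, h2, _, _, _⟩ := hmem p hp
    rw [ht0def]
    apply Real.sqrt_le_sqrt
    exact div_le_div₀ (hσpos _ h2).le (hδle _ h2) (hσpos _ h1) (hleMu _ h1)
  have hup : P ≤ T * Real.exp (c * L * (x m - x ℓ)) := by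
    have step : ∀ p ∈ Finset.Ico ℓ m,
        (σ (x (p + 1)) + σ (x p)) / (2 * σ (x p)) ≤
          Real.sqrt (σ (x (p+1)) / σ (x p)) * Real.exp (c * L * (x (p+1) - x p)) := by
      intro p hp
      obtain ⟨h1, h2, h3, h4, h5⟩ := hmem p hp
      set sp := Real.sqrt (σ (x (p+1)) / σ (x p)) with hspdef
      have hsp : t0 ≤ sp := hsqrt_lb p hp
      have hkey := (key _ h1 _ h2 h3).2
      have hy : 0 ≤ c * L * (x (p+1) - x p) := by positivity
      have hexp : 1 + c * L * (x (p+1) - x p) ≤ Real.exp (c * L * (x (p+1) - x p)) := by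
        linarith [Real.add_one_le_exp (c * L * (x (p+1) - x p))]
      have h6 : K * (x (p+1) - x p)^2 ≤ sp * (c * L * (x (p+1) - x p)) := by
        have e1 : K * (x (p+1) - x p)^2 ≤ K * (L * (x (p+1) - x p)) := by
          have : (x (p+1) - x p)^2 ≤ L * (x (p+1) - x p) := by nlinarith
          nlinarith
        have e2 : K * (L * (x (p+1) - x p)) ≤ (K+1) * (L * (x (p+1) - x p)) := by nlinarith
        have e3 : (K+1) * (L * (x (p+1) - x p)) = t0 * (c * L * (x (p+1) - x p)) := by
          rw [hcdef]; field_simp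
        have e4 : t0 * (c * L * (x (p+1) - x p)) ≤ sp * (c * L * (x (p+1) - x p)) := by
          apply mul_le_mul_of_nonneg_right hsp hy
        linarith
      calc (σ (x (p + 1)) + σ (x p)) / (2 * σ (x p))
          ≤ sp + K * (x (p+1) - x p)^2 := hkey
        _ ≤ sp + sp * (c * L * (x (p+1) - x p)) := by linarith
        _ = sp * (1 + c * L * (x (p+1) - x p)) := by ring
        _ ≤ sp * Real.exp (c * L * (x (p+1) - x p)) := by
            apply mul_le_mul_of_nonneg_left hexp (le_trans ht0.le hsp)
    calc P ≤ ∏ p ∈ Finset.Ico ℓ m,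
          Real.sqrt (σ (x (p+1)) / σ (x p)) * Real.exp (c * L * (x (p+1) - x p)) := by
          rw [hPdef]
          apply Finset.prod_le_prod
          · intro p _
            have := hpos p ?_ ; have := hpos (p+1) ?_ <;> try positivity
            all_goals rw [Finset.mem_Ico] at *; omega
          · exact step
      _ = T * Real.exp (c * L * (x m - x ℓ)) := by
          rw [Finset.prod_mul_distrib, htel m hmN ℓ hlm, ← Real.exp_sum, ← Finset.mul_sum, hts]
  -- conclude
  have hdiff : x m - x ℓ ≤ 1 := by
    have h1 : x m ≤ 1 := by rw [← hxN]; exact hmono N le_rfl m hmN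
    have h2 : 0 ≤ x ℓ := by rw [← hx0]; exact hmono ℓ (by omega) 0 (Nat.zero_le _)
    linarith
  have hdiff0 : 0 ≤ x m - x ℓ := by linarith [hmono m hmN ℓ hlm]
  set y := c * L * (x m - x ℓ) with hydef
  have hy0 : 0 ≤ y := by positivity
  have hyc : y ≤ c * L := by
    rw [hydef]
    have := mul_le_of_le_one_right (mul_pos hc hL0).le hdiff
    linarith
  have hycc : y ≤ c := le_trans hyc (mul_le_of_le_one_right hc.le hL1)
  have hexp1 : Real.exp y - 1 ≤ y * Real.exp y := by
    have h1 : (1 - y) * Real.exp y ≤ Real.exp (-y) * Real.exp y :=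
      mul_le_mul_of_nonneg_right (by linarith [Real.add_one_le_exp (-y)]) (Real.exp_pos y).le
    rw [← Real.exp_add, neg_add_cancel, Real.exp_zero] at h1
    nlinarith [h1]
  have hexp2 : y * Real.exp y ≤ c * L * Real.exp c := by
    have := Real.exp_le_exp.mpr hycc
    nlinarith [Real.exp_pos y]
  rw [abs_of_nonneg (by linarith : (0:ℝ) ≤ P - T)]
  have : P - T ≤ T * (Real.exp y - 1) := by
    rw [mul_sub, mul_one]
    linarith [hup]
  calc P - T ≤ T * (Real.exp y - 1) := this
    _ ≤ Tmax * (Real.exp y - 1) :=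
        mul_le_mul_of_nonneg_right hTle (by linarith [Real.one_le_exp hy0])
    _ ≤ Tmax * (c * L * Real.exp c) := mul_le_mul_of_nonneg_left (by linarith) hTmax.le
    _ = Tmax * c * Real.exp c * L := by ring
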